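/- Suppose each hysteretic load j switches on when ω_j > ω^1_j and off when ω_j < ω^0_j, with ω^1_j > ω^0_j > 0. If ω^1_j - ω^0_j ≥ d̄_j / D for all j ∈ N, where D = Σ_j (α_j + A_j), then for every load vector p^L ∈ ℝ^{|N|} there exists a pair (ω*, σ*) with σ* ∈ {0,1}^{|N|} and ω* = (-ℓ - Σ_j d̄_j σ*_j)/D such that for every j: if σ*_j = 0 then ω* ≤ ω^1_j, and if σ*_j = 1 then ω* ≥ ω^0_j (i.e., no load's hysteresis condition is violated). -/
import Mathlib


/-- If ω^1_j - ω^0_j ≥ d̄_j / D for all j, then for every load vector p^L there exists an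
equilibrium pair (ω*, σ*) with σ* ∈ {0,1}^N and ω* = (-ℓ - Σ_j d̄_j σ*_j)/D such that
no load's hysteresis condition is violated. -/
theorem stmt_2 {N : Type*} [Fintype N]
    (dbar ω0 ω1 α A pL : N → ℝ)
    (hd : ∀ j, 0 < dbar j)
    (hα : ∀ j, 0 < α j) (hA : ∀ j, 0 < A j)
    (hth : ∀ j, 0 < ω0 j ∧ ω0 j < ω1 j)
    (hgap : ∀ j, ω1 j - ω0 j ≥ dbar j / (∑ k, (α k + A k))) :
    ∃ σ : N → ℝ, (∀ j, σ j = 0 ∨ σ j = 1) ∧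
      ∀ j : N,
        (σ j = 0 →
          (-(∑ i, pL i) - ∑ i, dbar i * σ i) / (∑ k, (α k + A k)) ≤ ω1 j) ∧
        (σ j = 1 →
          (-(∑ i, pL i) - ∑ i, dbar i * σ i) / (∑ k, (α k + A k)) ≥ ω0 j) := by
  classical
  by_cases hne : Nonempty N
  · set D : ℝ := ∑ k, (α k + A k) with hD
    have hDpos : 0 < D := by
      apply Finset.sum_pos
      · intro k _; exact add_pos (hα k) (hA k)
      · exact Finset.univ_nonempty
    set L : ℝ := ∑ i, pL i with hL
    set w : Finset N → ℝ := fun S => (-L - ∑ i ∈ S, dbar i) / D with hw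
    -- key step lemma: inserting an element decreases w by dbar/D
    have hwins : ∀ (S : Finset N) (j : N), j ∉ S →
        w (insert j S) = w S - dbar j / D := by
      intro S j hj
      simp only [hw, Finset.sum_insert hj]
      field_simp
      ring
    have key : ∀ (n : ℕ) (S : Finset N), Sᶜ.card ≤ n →
        (∀ k ∈ S, ω0 k ≤ w S) →
        (∀ k ∈ S, ∀ j, j ∉ S → ω1 j < w S → ω0 k ≤ ω0 j) →
        ∃ T : Finset N, (∀ k ∈ T, ω0 k ≤ w T) ∧ (∀ j, j ∉ T → w T ≤ ω1 j) := by
      intro n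
      induction n with
      | zero =>
        intro S hcard ha _
        have hSuniv : S = Finset.univ := by
          have : Sᶜ = ∅ := Finset.card_eq_zero.mp (Nat.le_zero.mp hcard)
          simpa [Finset.compl_eq_empty_iff] using this
        exact ⟨S, ha, fun j hj => absurd (hSuniv ▸ Finset.mem_univ j) hj⟩
      | succ n ih =>
        intro S hcard ha hb
        set V : Finset N := Sᶜ.filter (fun j => ω1 j < w S) with hV
        by_cases hVe : V = ∅
        · refine ⟨S, ha, fun j hj => ?_⟩
          by_contra hlt
          push_neg at hlt
          have : j ∈ V := Finset.mem_filter.mpr ⟨Finset.mem_compl.mpr hj, hlt⟩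
          simp [hVe] at this
        · obtain ⟨j₀, hj₀V, hj₀min⟩ :=
            Finset.exists_min_image V ω0 (Finset.nonempty_of_ne_empty hVe)
          obtain ⟨hj₀S, hj₀lt⟩ := Finset.mem_filter.mp hj₀V
          have hj₀S' : j₀ ∉ S := Finset.mem_compl.mp hj₀S
          set S' : Finset N := insert j₀ S with hS'
          have hwS' : w S' = w S - dbar j₀ / D := hwins S j₀ hj₀S'
          -- ω0 j₀ ≤ w S'
          have hkey : ω0 j₀ ≤ w S' := by
            have := hgap j₀
            rw [hwS']
            nlinarith [hj₀lt]
          have hwle : w S' ≤ w S := by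
            rw [hwS']
            have : 0 < dbar j₀ / D := div_pos (hd j₀) hDpos
            linarith
          -- invariants for S'
          have ha' : ∀ k ∈ S', ω0 k ≤ w S' := by
            intro k hk
            rcases Finset.mem_insert.mp hk with rfl | hkS
            · exact hkey
            · exact le_trans (hb k hkS j₀ hj₀S' hj₀lt) hkey
          have hb' : ∀ k ∈ S', ∀ j, j ∉ S' → ω1 j < w S' → ω0 k ≤ ω0 j := by
            intro k hk j hjS' hjlt
            have hjS : j ∉ S := fun h => hjS' (Finset.mem_insert_of_mem h)
            have hjV : j ∈ V :=
              Finset.mem_filter.mpr ⟨Finset.mem_compl.mpr hjS, lt_of_lt_of_le hjlt hwle⟩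
            rcases Finset.mem_insert.mp hk with rfl | hkS
            · exact hj₀min j hjV
            · exact le_trans (hb k hkS j₀ hj₀S' hj₀lt)
                (hj₀min j hjV)
          have hcard' : S'ᶜ.card ≤ n := by
            have : S'ᶜ = Sᶜ.erase j₀ := by
              simp [hS', Finset.compl_insert]
            rw [this, Finset.card_erase_of_mem hj₀S]
            omega
          exact ih S' hcard' ha' hb'
    obtain ⟨T, hT1, hT2⟩ := key (∅ : Finset N)ᶜ.card ∅ le_rfl
      (by simp) (by simp)
    refine ⟨fun j => if j ∈ T then 1 else 0, fun j => by by_cases h : j ∈ T <;> simp [h], ?_⟩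
    have hsum : (∑ i, dbar i * (if i ∈ T then (1:ℝ) else 0)) = ∑ i ∈ T, dbar i := by
      rw [Finset.sum_congr rfl (fun i _ => by rw [mul_ite, mul_one, mul_zero])]
      simp [Finset.sum_ite_mem]
    intro j
    constructor
    · intro hj
      have hjT : j ∉ T := by
        by_contra h; simp [h] at hj
      rw [hsum]
      exact hT2 j hjT
    · intro hj
      have hjT : j ∈ T := by
        by_contra h; simp [h] at hj
      rw [hsum]
      exact hT1 j hjT
  · exact ⟨fun _ => 0, fun j => (hne ⟨j⟩).elim, fun j => (hne ⟨j⟩).elim⟩
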